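/- Fix an integer n ≥ 1 and λ0 ∈ ℂ with Im(λ0) ≠ 0, and take the parameters a_j, b_j, ζ, ω_j, z0 as in the context. Then the b_j are pairwise distinct, a_j² = −(b_j + z0)^{n+1} / ∏_{k≠j}(b_j − b_k) for every j = 1,…,n, and consequently D(z) = (z − z0)^{n+1} as polynomials in ℂ[z]. -/

import Mathlib

open Polynomial Complex Finset

noncomputable section

/-- `ζ = 2·Im(λ0)/(n+1)`. -/
def zeta (n : ℕ) (l0 : ℂ) : ℝ := 2 * l0.im / (n + 1)

/-- `ω_j = jπ/(n+1)`. -/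
def om (n j : ℕ) : ℝ := j * Real.pi / (n + 1)

/-- `a_j = ζ·csc(ω_j)` for `j = 1,…,n` (indexed by `j : Fin n` as `j+1`). -/
def aa (n : ℕ) (l0 : ℂ) (j : Fin n) : ℝ := zeta n l0 / Real.sin (om n ((j : ℕ) + 1))

/-- `b_j = ζ·cot(ω_j) − 2·Re(λ0)` for `j = 1,…,n`. -/
def bb (n : ℕ) (l0 : ℂ) (j : Fin n) : ℝ :=
  zeta n l0 * (Real.cos (om n ((j : ℕ) + 1)) / Real.sin (om n ((j : ℕ) + 1))) - 2 * l0.re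

/-- `z0 = 2·Re(λ0) + i·ζ`. -/
def zz0 (n : ℕ) (l0 : ℂ) : ℂ := 2 * l0.re + Complex.I * zeta n l0

/-- The characteristic polynomial
`D(z) = (z − 2λ0)·∏ⱼ (z + bⱼ) − Σⱼ aⱼ²·∏_{k≠j} (z + bₖ)` in `ℂ[z]`. -/
def Dpoly (n : ℕ) (l0 : ℂ) (a b : Fin n → ℝ) : Polynomial ℂ :=
  (X - C (2 * l0)) * ∏ j, (X + C (b j : ℂ))
    - ∑ j, C ((a j : ℂ) ^ 2) * ∏ k ∈ Finset.univ.erase j, (X + C (b k : ℂ))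

namespace Stmt4Aux

lemma zeta_ne {n : ℕ} {l0 : ℂ} (him : l0.im ≠ 0) : zeta n l0 ≠ 0 := by
  unfold zeta
  exact div_ne_zero (mul_ne_zero two_ne_zero him) (by positivity)

lemma om_pos {n j : ℕ} (h1 : 1 ≤ j) : 0 < om n j := by
  unfold om
  have : (0:ℝ) < j := by exact_mod_cast h1
  positivity

lemma om_lt_pi {n j : ℕ} (h2 : j ≤ n) : om n j < Real.pi := by
  unfold om
  rw [div_lt_iff₀ (by positivity)]
  have : (j:ℝ) < n + 1 := by exact_mod_cast Nat.lt_succ_of_le h2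
  nlinarith [Real.pi_pos]

lemma sin_om_pos {n j : ℕ} (h1 : 1 ≤ j) (h2 : j ≤ n) : 0 < Real.sin (om n j) :=
  Real.sin_pos_of_pos_of_lt_pi (om_pos h1) (om_lt_pi h2)

lemma bb_injective {n : ℕ} {l0 : ℂ} (him : l0.im ≠ 0) :
    Function.Injective (bb n l0) := by
  intro j k h
  unfold bb at h
  have hζ := zeta_ne (n := n) him
  have hcot : Real.cos (om n ((j:ℕ)+1)) / Real.sin (om n ((j:ℕ)+1))
      = Real.cos (om n ((k:ℕ)+1)) / Real.sin (om n ((k:ℕ)+1)) :=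
    mul_left_cancel₀ hζ (by linarith)
  have htan : Real.tan (Real.pi/2 - om n ((j:ℕ)+1)) = Real.tan (Real.pi/2 - om n ((k:ℕ)+1)) := by
    rw [Real.tan_pi_div_two_sub, Real.tan_pi_div_two_sub, Real.tan_eq_sin_div_cos,
      Real.tan_eq_sin_div_cos, inv_div, inv_div, hcot]
  have hmem : ∀ i : Fin n, Real.pi/2 - om n ((i:ℕ)+1) ∈ Set.Ioo (-(Real.pi/2)) (Real.pi/2) := by
    intro i
    constructor
    · have := om_lt_pi (n := n) (j := (i:ℕ)+1) i.2
      linarith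
    · have := om_pos (n := n) (j := (i:ℕ)+1) le_add_self
      linarith
  have := Real.injOn_tan (hmem j) (hmem k) htan
  have hom : om n ((j:ℕ)+1) = om n ((k:ℕ)+1) := by linarith
  unfold om at hom
  have hπ := Real.pi_ne_zero
  have hden : ((n:ℝ)+1) ≠ 0 := by positivity
  rw [div_eq_div_iff hden hden] at hom
  have h4 := mul_right_cancel₀ hπ (mul_right_cancel₀ hden hom)
  have h5 : ((j:ℕ):ℝ) = k := by push_cast at h4; linarith
  exact Fin.ext (by exact_mod_cast h5)


lemma key {n : ℕ} {l0 : ℂ} (him : l0.im ≠ 0) (j : Fin n) :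
    (aa n l0 j : ℂ) ^ 2 * ∏ k ∈ Finset.univ.erase j, ((bb n l0 j : ℂ) - (bb n l0 k : ℂ))
      = -((bb n l0 j : ℂ) + zz0 n l0) ^ (n + 1) := by
  classical
  have hn1 : ((n:ℂ) + 1) ≠ 0 := by
    exact_mod_cast (Nat.cast_ne_zero (R := ℂ)).2 (Nat.succ_ne_zero n)
  have hζR : zeta n l0 ≠ 0 := zeta_ne him
  have hζ : ((zeta n l0 : ℝ):ℂ) ≠ 0 := Complex.ofReal_ne_zero.2 hζR
  have hsin : ∀ k : Fin n, Real.sin (om n ((k:ℕ)+1)) ≠ 0 :=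
    fun k => (sin_om_pos le_add_self k.2).ne'
  set η : ℂ := Complex.exp (2 * Real.pi * Complex.I / (n+1)) with hη
  have hprim : IsPrimitiveRoot η (n+1) := by
    have := Complex.isPrimitiveRoot_exp (n+1) (Nat.succ_ne_zero n)
    rw [hη]; convert this using 3; push_cast; ring
  set u : Fin n → ℂ := fun k => η ^ ((k:ℕ) + 1) with hu
  -- trig description of u
  have huv : ∀ k : Fin n, u k =
      ((Real.cos (om n ((k:ℕ)+1)) : ℂ) + (Real.sin (om n ((k:ℕ)+1)) : ℂ) * Complex.I) ^ 2 := by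
    intro k
    have h1 : u k = Complex.exp ((((k:ℕ)+1 : ℕ):ℂ) * (2 * Real.pi * Complex.I / (n+1))) := by
      rw [hu, Complex.exp_nat_mul]
    have h2 : ((((k:ℕ)+1 : ℕ)):ℂ) * (2 * Real.pi * Complex.I / (n+1))
        = ((2:ℕ):ℂ) * (((om n ((k:ℕ)+1) : ℝ) : ℂ) * Complex.I) := by
      unfold om; push_cast; field_simp
    rw [h1, h2, Complex.exp_nat_mul, Complex.exp_mul_I, ← Complex.ofReal_cos,
      ← Complex.ofReal_sin]
  have hu1 : ∀ k : Fin n, u k - 1 = 2 * Complex.I * (Real.sin (om n ((k:ℕ)+1)) : ℂ) *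
      ((Real.cos (om n ((k:ℕ)+1)) : ℂ) + (Real.sin (om n ((k:ℕ)+1)) : ℂ) * Complex.I) := by
    intro k
    have hp : ((Real.sin (om n ((k:ℕ)+1)) : ℝ):ℂ)^2 + ((Real.cos (om n ((k:ℕ)+1)) : ℝ):ℂ)^2 = 1 := by
      have := Real.sin_sq_add_cos_sq (om n ((k:ℕ)+1))
      exact_mod_cast congrArg (fun x : ℝ => (x:ℂ)) this
    rw [huv k]
    linear_combination hp - ((Real.sin (om n ((k:ℕ)+1)) : ℝ):ℂ)^2 * Complex.I_sq
  have hvne : ∀ k : Fin n,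
      ((Real.cos (om n ((k:ℕ)+1)) : ℂ) + (Real.sin (om n ((k:ℕ)+1)) : ℂ) * Complex.I) ≠ 0 := by
    intro k h0
    apply hsin k
    have := congrArg Complex.im h0
    simpa [Complex.sin_ofReal_re] using this
  have hu1ne : ∀ k : Fin n, u k - 1 ≠ 0 := by
    intro k
    rw [hu1 k]
    exact mul_ne_zero (mul_ne_zero (mul_ne_zero two_ne_zero Complex.I_ne_zero)
      (Complex.ofReal_ne_zero.2 (hsin k))) (hvne k)
  -- trig description of b + z0 and a
  have hcz : ∀ k : Fin n, (((bb n l0 k : ℝ):ℂ) + zz0 n l0) * (Real.sin (om n ((k:ℕ)+1)) : ℂ)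
      = ((zeta n l0 : ℝ):ℂ) * ((Real.cos (om n ((k:ℕ)+1)) : ℂ)
          + (Real.sin (om n ((k:ℕ)+1)) : ℂ) * Complex.I) := by
    intro k
    have hsc : ((Real.sin (om n ((k:ℕ)+1)) : ℝ):ℂ) ≠ 0 := Complex.ofReal_ne_zero.2 (hsin k)
    have hsc' : Complex.sin ((om n ((k:ℕ)+1) : ℝ):ℂ) ≠ 0 := by
      rw [← Complex.ofReal_sin]; exact hsc
    unfold bb zz0
    push_cast
    field_simp
    ring
  have haz : ∀ k : Fin n, ((aa n l0 k : ℝ):ℂ) * (Real.sin (om n ((k:ℕ)+1)) : ℂ)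
      = ((zeta n l0 : ℝ):ℂ) := by
    intro k
    have hsc : ((Real.sin (om n ((k:ℕ)+1)) : ℝ):ℂ) ≠ 0 := Complex.ofReal_ne_zero.2 (hsin k)
    have hsc' : Complex.sin ((om n ((k:ℕ)+1) : ℝ):ℂ) ≠ 0 := by
      rw [← Complex.ofReal_sin]; exact hsc
    unfold aa
    push_cast
    field_simp
  have hc : ∀ k : Fin n, (((bb n l0 k : ℝ):ℂ) + zz0 n l0) * (u k - 1)
      = (2 * Complex.I * ((zeta n l0 : ℝ):ℂ)) * u k := by
    intro k
    rw [hu1 k, huv k]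
    linear_combination (2 * Complex.I * ((Real.cos (om n ((k:ℕ)+1)) : ℂ)
      + (Real.sin (om n ((k:ℕ)+1)) : ℂ) * Complex.I)) * hcz k
  have ha : ((aa n l0 j : ℝ):ℂ)^2 * (u j - 1)^2
      = (2 * Complex.I * ((zeta n l0 : ℝ):ℂ))^2 * u j := by
    rw [hu1 j, huv j]
    linear_combination (4 * Complex.I^2 * ((Real.cos (om n ((j:ℕ)+1)) : ℂ)
      + (Real.sin (om n ((j:ℕ)+1)) : ℂ) * Complex.I)^2
      * (((aa n l0 j : ℝ):ℂ) * (Real.sin (om n ((j:ℕ)+1)) : ℂ) + ((zeta n l0 : ℝ):ℂ))) * haz j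
  -- the polynomial with roots u k
  have hmpos : 0 < n + 1 := Nat.succ_pos n
  have hXprod : (X:ℂ[X]) ^ (n+1) - 1 = (X - C 1) * ∏ k : Fin n, (X - C (u k)) := by
    have h0 := X_pow_sub_C_eq_prod hprim hmpos (one_pow (n+1))
    rw [map_one] at h0
    rw [h0, Finset.prod_range_succ', mul_comm]
    congr 1
    · simp
    · rw [Finset.prod_range]
      simp [hu]
  set G : ℂ[X] := ∏ k : Fin n, (X - C (u k)) with hGdef
  have hd : G + (X - C 1) * derivative G = C ((n:ℂ)+1) * X ^ n := by
    have h1 := congrArg derivative hXprod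
    rw [derivative_sub, derivative_one, derivative_X_pow, derivative_mul, derivative_sub,
      derivative_X, derivative_C, sub_zero, sub_zero, one_mul] at h1
    rw [← h1, Nat.add_sub_cancel]
    norm_num
  have hG1 : Polynomial.eval 1 G = ∏ k : Fin n, (1 - u k) := by
    rw [hGdef, eval_prod]; simp
  have h3 : (1 - u j) * ∏ k ∈ Finset.univ.erase j, (1 - u k) = (n:ℂ)+1 := by
    have e1 := congrArg (Polynomial.eval 1) hd
    rw [eval_add, eval_mul, eval_sub, eval_X, eval_C, sub_self, zero_mul, add_zero,
      eval_mul, eval_C, eval_pow, eval_X, one_pow, mul_one, hG1] at e1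
    rw [show (1 - u j) * ∏ k ∈ Finset.univ.erase j, (1 - u k) = ∏ k, (1 - u k) from
      Finset.mul_prod_erase _ (fun k => 1 - u k) (Finset.mem_univ j), e1]
  have hGsplit : G = (X - C (u j)) * ∏ k ∈ Finset.univ.erase j, (X - C (u k)) :=
    (Finset.mul_prod_erase _ _ (Finset.mem_univ j)).symm
  have hevalH : Polynomial.eval (u j) (∏ k ∈ Finset.univ.erase j, (X - C (u k)))
      = ∏ k ∈ Finset.univ.erase j, (u j - u k) := by rw [eval_prod]; simp
  have hGevalj : Polynomial.eval (u j) G = 0 := by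
    rw [hGsplit, eval_mul, eval_sub, eval_X, eval_C, sub_self, zero_mul]
  have hderiv : Polynomial.eval (u j) (derivative G) = ∏ k ∈ Finset.univ.erase j, (u j - u k) := by
    have h2 := congrArg derivative hGsplit
    rw [derivative_mul, derivative_sub, derivative_X, derivative_C, sub_zero, one_mul] at h2
    rw [h2, eval_add, eval_mul, eval_sub, eval_X, eval_C, sub_self, zero_mul, add_zero, hevalH]
  have h4 : (u j - 1) * ∏ k ∈ Finset.univ.erase j, (u j - u k) = ((n:ℂ)+1) * u j ^ n := by
    have e2 := congrArg (Polynomial.eval (u j)) hd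
    rw [eval_add, eval_mul, eval_sub, eval_X, eval_C, hGevalj, zero_add, hderiv,
      eval_mul, eval_C, eval_pow, eval_X] at e2
    exact e2
  -- assembling
  have hcard : (Finset.univ.erase j).card = n - 1 := by
    rw [Finset.card_erase_of_mem (Finset.mem_univ j), Finset.card_univ, Fintype.card_fin]
  set w : ℂ := u j - 1 with hw
  set S : ℂ := (-1 : ℂ)^(n-1) with hS
  set A : ℂ := ∏ k ∈ Finset.univ.erase j, (u j - u k) with hA
  set B : ℂ := ∏ k ∈ Finset.univ.erase j, (1 - u k) with hB
  set q : ℂ := ∏ k ∈ Finset.univ.erase j, ((bb n l0 j : ℂ) - (bb n l0 k : ℂ)) with hq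
  set δ : ℂ := 2 * Complex.I * ((zeta n l0 : ℝ):ℂ) with hδ
  have eB : ∏ k ∈ Finset.univ.erase j, (u k - 1) = S * B := by
    calc ∏ k ∈ Finset.univ.erase j, (u k - 1)
        = ∏ k ∈ Finset.univ.erase j, ((-1) * (1 - u k)) :=
          Finset.prod_congr rfl (by intros; ring)
      _ = ((-1:ℂ)^(n-1)) * ∏ k ∈ Finset.univ.erase j, (1 - u k) := by
          rw [Finset.prod_mul_distrib, Finset.prod_const, hcard]
      _ = S * B := by rw [← hS]
  have E1 : q * (w ^ (n-1) * (S * B)) = δ^(n-1) * (S * A) := by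
    have e : ∀ k ∈ Finset.univ.erase j,
        ((bb n l0 j : ℂ) - (bb n l0 k : ℂ)) * (w * (u k - 1))
          = δ * (-1 * (u j - u k)) := by
      intro k hk
      rw [hw, hδ]
      linear_combination (u k - 1) * hc j - (u j - 1) * hc k
    have e2 := Finset.prod_congr rfl e
    have L : ∏ k ∈ Finset.univ.erase j,
        (((bb n l0 j : ℂ) - (bb n l0 k : ℂ)) * (w * (u k - 1)))
          = q * (w ^ (n-1) * (S * B)) := by
      rw [Finset.prod_mul_distrib, Finset.prod_mul_distrib, Finset.prod_const, hcard, eB]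
    have R : ∏ k ∈ Finset.univ.erase j, (δ * (-1 * (u j - u k)))
        = δ^(n-1) * (S * A) := by
      rw [Finset.prod_mul_distrib, Finset.prod_const, hcard, Finset.prod_mul_distrib,
        Finset.prod_const, hcard, ← hS]
    rw [← L, e2, R]
  have hn : 0 < n := j.pos
  have hwne : w ≠ 0 := hu1ne j
  have hBne : B ≠ 0 := by
    intro h0
    exact hn1 (by rw [← h3, h0, mul_zero])
  have hSne : S ≠ 0 := pow_ne_zero _ (by norm_num)
  have hwB : w * B = -((n:ℂ)+1) := by rw [hw]; linear_combination -h3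
  have hp1 : w^(n+1) = w^(n-1) * w^2 := by rw [← pow_add]; congr 1; omega
  have hp2 : δ^(n+1) = δ^(n-1) * δ^2 := by rw [← pow_add]; congr 1; omega
  have hcg : ((bb n l0 j : ℂ) + zz0 n l0)^(n+1) * w^(n+1) = δ^(n+1) * u j^(n+1) := by
    rw [← mul_pow, hc j, mul_pow]
  have final : ((aa n l0 j : ℂ)^2 * q) * (w^(n+1) * w^2 * (S * B))
      = δ^(n+1) * u j^(n+1) * S * ((n:ℂ)+1) * w := by
    calc ((aa n l0 j : ℂ)^2 * q) * (w^(n+1) * w^2 * (S * B))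
        = ((aa n l0 j:ℂ)^2 * w^2) * (q * (w^(n-1) * (S*B))) * w^2 := by rw [hp1]; ring
      _ = (δ^2 * u j) * (δ^(n-1) * (S * A)) * w^2 := by rw [ha, E1]
      _ = δ^(n+1) * S * u j * (w * A) * w := by rw [hp2]; ring
      _ = δ^(n+1) * S * u j * (((n:ℂ)+1) * u j^n) * w := by rw [hw, h4]
      _ = δ^(n+1) * (u j * u j^n) * S * ((n:ℂ)+1) * w := by ring
      _ = δ^(n+1) * u j^(n+1) * S * ((n:ℂ)+1) * w := by rw [← pow_succ']
  have finalR : (-((bb n l0 j : ℂ) + zz0 n l0)^(n+1)) * (w^(n+1) * w^2 * (S * B))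
      = δ^(n+1) * u j^(n+1) * S * ((n:ℂ)+1) * w := by
    calc (-((bb n l0 j : ℂ) + zz0 n l0)^(n+1)) * (w^(n+1) * w^2 * (S * B))
        = -((((bb n l0 j : ℂ) + zz0 n l0)^(n+1) * w^(n+1)) * S * (w*B) * w) := by ring
      _ = -((δ^(n+1) * u j^(n+1)) * S * (-((n:ℂ)+1)) * w) := by rw [hcg, hwB]
      _ = δ^(n+1) * u j^(n+1) * S * ((n:ℂ)+1) * w := by ring
  have hmul : (w^(n+1) * w^2 * (S * B)) ≠ 0 :=
    mul_ne_zero (mul_ne_zero (pow_ne_zero _ hwne) (pow_ne_zero _ hwne)) (mul_ne_zero hSne hBne)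
  exact mul_right_cancel₀ hmul (final.trans finalR.symm)

lemma cot_sum {n : ℕ} :
    ∑ j : Fin n, Real.cos (om n ((j:ℕ)+1)) / Real.sin (om n ((j:ℕ)+1)) = 0 := by
  set f : Fin n → ℝ := fun j => Real.cos (om n ((j:ℕ)+1)) / Real.sin (om n ((j:ℕ)+1)) with hf
  have hrev : ∀ j : Fin n, f (Fin.rev j) = -(f j) := by
    intro j
    have hval : ((Fin.rev j : Fin n) : ℕ) = n - ((j:ℕ) + 1) := rfl
    have h1 : ((Fin.rev j : Fin n) : ℕ) + 1 = n - (j:ℕ) := by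
      have := j.2; omega
    have h2 : om n (((Fin.rev j : Fin n) : ℕ) + 1) = Real.pi - om n ((j:ℕ)+1) := by
      rw [h1]; unfold om
      have hcast : ((n - (j:ℕ) : ℕ):ℝ) = (n:ℝ) - (j:ℕ) := by
        rw [Nat.cast_sub (le_of_lt j.2)]
      rw [hcast]
      field_simp
      push_cast; ring
    rw [hf]
    simp only []
    rw [h2, Real.cos_pi_sub, Real.sin_pi_sub, neg_div]
  have hsum : ∑ j : Fin n, f j = ∑ j : Fin n, -(f j) := by
    calc ∑ j : Fin n, f j = ∑ j : Fin n, f (Fin.rev j) :=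
          (Fintype.sum_bijective Fin.rev Fin.rev_bijective _ _ (fun x => rfl)).symm
      _ = ∑ j : Fin n, -(f j) := Finset.sum_congr rfl (fun j _ => hrev j)
  rw [Finset.sum_neg_distrib] at hsum
  linarith

lemma sum_bb {n : ℕ} {l0 : ℂ} : ∑ j : Fin n, bb n l0 j = -(2 * n * l0.re) := by
  unfold bb
  rw [Finset.sum_sub_distrib, ← Finset.mul_sum, cot_sum, mul_zero, Finset.sum_const,
    Finset.card_univ, Fintype.card_fin, zero_sub, nsmul_eq_mul]
  ring


lemma Dlemma {n : ℕ} {l0 : ℂ} (hn : 1 ≤ n) (him : l0.im ≠ 0) :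
    Dpoly n l0 (aa n l0) (bb n l0) = (X - C (zz0 n l0)) ^ (n + 1) := by
  classical
  set P : ℂ[X] := ∏ k : Fin n, (X + C ((bb n l0 k : ℝ):ℂ)) with hP
  set A : ℂ[X] := ∑ k : Fin n, C (((aa n l0 k : ℝ):ℂ)^2) *
    ∏ l ∈ Finset.univ.erase k, (X + C ((bb n l0 l:ℝ):ℂ)) with hA
  set F : ℂ[X] := (X - C (2 * l0)) * P with hF
  set Gp : ℂ[X] := (X - C (zz0 n l0)) ^ (n+1) with hGp
  have hPmonic : P.Monic := monic_prod_of_monic _ _ (fun k _ => monic_X_add_C _)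
  have hFmonic : F.Monic := (monic_X_sub_C _).mul hPmonic
  have hGmonic : Gp.Monic := (monic_X_sub_C _).pow _
  have hPdeg : P.natDegree = n := by
    rw [hP, natDegree_prod _ _ (fun k _ => (monic_X_add_C _).ne_zero)]
    simp
  have hFdeg : F.natDegree = n + 1 := by
    rw [hF, natDegree_mul (monic_X_sub_C _).ne_zero hPmonic.ne_zero, natDegree_X_sub_C, hPdeg,
      add_comm]
  have hGdeg : Gp.natDegree = n + 1 := by
    rw [hGp, natDegree_pow, natDegree_X_sub_C, mul_one]
  -- degree bound for A
  have hAdeg : A.natDegree ≤ n - 1 := by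
    rw [hA]
    apply natDegree_sum_le_of_forall_le
    intro k _
    apply le_trans (natDegree_mul_le)
    rw [natDegree_C, zero_add]
    apply le_trans (natDegree_prod_le _ _)
    have : ∀ l ∈ Finset.univ.erase k, ((X : ℂ[X]) + C ((bb n l0 l:ℝ):ℂ)).natDegree = 1 :=
      fun l _ => natDegree_X_add_C _
    rw [Finset.sum_congr rfl this, Finset.sum_const,
      Finset.card_erase_of_mem (Finset.mem_univ k), Finset.card_univ, Fintype.card_fin,
      smul_eq_mul, mul_one]
  -- next coefficients
  have hFnext : F.coeff n = -(2*l0) + ∑ k : Fin n, ((bb n l0 k : ℝ):ℂ) := by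
    have h1 : F.coeff n = F.nextCoeff := by
      rw [nextCoeff_of_natDegree_pos (by rw [hFdeg]; omega), hFdeg, Nat.add_sub_cancel]
    rw [h1, hF, Monic.nextCoeff_mul (monic_X_sub_C _) hPmonic, nextCoeff_X_sub_C, hP,
      Monic.nextCoeff_prod _ _ (fun k _ => monic_X_add_C _)]
    simp [nextCoeff_X_add_C]
  have hGnext : Gp.coeff n = -(((n:ℂ)+1) * zz0 n l0) := by
    have h1 : Gp.coeff n = Gp.nextCoeff := by
      rw [nextCoeff_of_natDegree_pos (by rw [hGdeg]; omega), hGdeg, Nat.add_sub_cancel]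
    rw [h1, hGp, Monic.nextCoeff_pow (monic_X_sub_C _), nextCoeff_X_sub_C, nsmul_eq_mul]
    push_cast
    ring
  have hzsum : (∑ k : Fin n, ((bb n l0 k:ℝ):ℂ)) - 2*l0 + ((n:ℂ)+1) * zz0 n l0 = 0 := by
    have hn1 : ((n:ℂ) + 1) ≠ 0 := by
      exact_mod_cast (Nat.cast_ne_zero (R := ℂ)).2 (Nat.succ_ne_zero n)
    have hsum : ((∑ k : Fin n, bb n l0 k : ℝ) : ℂ) = ((-(2 * n * l0.re) : ℝ):ℂ) := by
      exact_mod_cast congrArg (fun x : ℝ => (x:ℂ)) (sum_bb (n := n) (l0 := l0))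
    rw [Complex.ofReal_sum] at hsum
    rw [hsum]
    unfold zz0 zeta
    push_cast
    field_simp
    linear_combination 2 * Complex.re_add_im l0
  have hcoeffn : (F - Gp).coeff n = 0 := by
    rw [coeff_sub, hFnext, hGnext]
    linear_combination hzsum
  -- the difference polynomial
  set E : ℂ[X] := F - Gp - A with hE
  have hEcoeff : ∀ m : ℕ, n ≤ m → E.coeff m = 0 := by
    intro m hm
    have hA0 : A.coeff m = 0 :=
      coeff_eq_zero_of_natDegree_lt (lt_of_le_of_lt hAdeg (by omega))
    rcases eq_or_lt_of_le hm with rfl | hm'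
    · rw [hE, coeff_sub, coeff_sub, hA0, sub_zero, ← coeff_sub, hcoeffn]
    · have hFG : (F - Gp).coeff m = 0 := by
        rcases eq_or_lt_of_le (show n + 1 ≤ m by omega) with rfl | hm''
        · rw [coeff_sub]
          have c1 : F.coeff (n+1) = 1 := by
            have := hFmonic.coeff_natDegree; rwa [hFdeg] at this
          have c2 : Gp.coeff (n+1) = 1 := by
            have := hGmonic.coeff_natDegree; rwa [hGdeg] at this
          rw [c1, c2, sub_self]
        · rw [coeff_sub, coeff_eq_zero_of_natDegree_lt (by omega : F.natDegree < m),
            coeff_eq_zero_of_natDegree_lt (by omega : Gp.natDegree < m), sub_self]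
      rw [hE, coeff_sub, hA0, sub_zero, hFG]
  have hEdeg : E.natDegree ≤ n - 1 :=
    natDegree_le_iff_coeff_eq_zero.2 (fun N hN => hEcoeff N (by omega))
  have hEzero : E = 0 := by
    apply eq_zero_of_natDegree_lt_card_of_eval_eq_zero E
      (f := fun k : Fin n => -((bb n l0 k:ℝ):ℂ))
    · intro x y hxy
      apply bb_injective him
      have := neg_injective hxy
      exact_mod_cast this
    · intro k
      have hPe : P.eval (-((bb n l0 k:ℝ):ℂ)) = 0 := by
        rw [hP, eval_prod]
        apply Finset.prod_eq_zero (Finset.mem_univ k)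
        simp
      have hAe : A.eval (-((bb n l0 k:ℝ):ℂ))
          = ((aa n l0 k : ℝ):ℂ)^2 *
            ∏ l ∈ Finset.univ.erase k, (-((bb n l0 k:ℝ):ℂ) + ((bb n l0 l:ℝ):ℂ)) := by
        rw [hA, eval_finset_sum]
        rw [Finset.sum_eq_single k]
        · rw [eval_mul, eval_C, eval_prod]
          congr 1
          exact Finset.prod_congr rfl (fun l _ => by simp)
        · intro l _ hlk
          rw [eval_mul, eval_prod]
          have : ∏ i ∈ Finset.univ.erase l,
              Polynomial.eval (-((bb n l0 k:ℝ):ℂ)) (X + C ((bb n l0 i:ℝ):ℂ)) = 0 := by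
            apply Finset.prod_eq_zero (Finset.mem_erase.2 ⟨hlk.symm, Finset.mem_univ k⟩)
            simp
          rw [this, mul_zero]
        · intro hk; exact absurd (Finset.mem_univ k) hk
      have hprodneg : ∏ l ∈ Finset.univ.erase k, (-((bb n l0 k:ℝ):ℂ) + ((bb n l0 l:ℝ):ℂ))
          = (-1:ℂ)^(n-1) * ∏ l ∈ Finset.univ.erase k, (((bb n l0 k:ℝ):ℂ) - ((bb n l0 l:ℝ):ℂ)) := by
        calc ∏ l ∈ Finset.univ.erase k, (-((bb n l0 k:ℝ):ℂ) + ((bb n l0 l:ℝ):ℂ))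
            = ∏ l ∈ Finset.univ.erase k,
                ((-1) * (((bb n l0 k:ℝ):ℂ) - ((bb n l0 l:ℝ):ℂ))) :=
              Finset.prod_congr rfl (by intros; ring)
          _ = _ := by
              rw [Finset.prod_mul_distrib, Finset.prod_const,
                Finset.card_erase_of_mem (Finset.mem_univ k), Finset.card_univ,
                Fintype.card_fin]
      have hGe : Gp.eval (-((bb n l0 k:ℝ):ℂ))
          = (-1:ℂ)^(n+1) * (((bb n l0 k:ℝ):ℂ) + zz0 n l0)^(n+1) := by
        rw [hGp, eval_pow, eval_sub, eval_X, eval_C]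
        rw [show -((bb n l0 k:ℝ):ℂ) - zz0 n l0 = -(((bb n l0 k:ℝ):ℂ) + zz0 n l0) by ring,
          neg_pow]
      have hpow : (-1:ℂ)^(n+1) = (-1:ℂ)^(n-1) := by
        rw [show n+1 = (n-1)+2 by omega, pow_add]
        norm_num
      rw [hE, eval_sub, eval_sub, hF, eval_mul, hPe, mul_zero, hAe, hGe, hprodneg]
      linear_combination (-((((bb n l0 k:ℝ):ℂ) + zz0 n l0)^(n+1))) * hpow
        + (-((-1:ℂ)^(n-1))) * key him k
    · rw [Fintype.card_fin]; omega
  have : F - A = Gp := by linear_combination hEzero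
  rw [Dpoly]
  exact this

end Stmt4Aux

/-- with the explicit choice `a_j = ζ csc ω_j`, `b_j = ζ cot ω_j − 2Re(λ0)`,
the `b_j` are pairwise distinct, `a_j² = −(b_j + z0)^{n+1}/∏_{k≠j}(b_j − b_k)`, and
`D(z) = (z − z0)^{n+1}`. -/
theorem stmt4 (n : ℕ) (hn : 1 ≤ n) (l0 : ℂ) (him : l0.im ≠ 0) :
    Function.Injective (bb n l0) ∧
    (∀ j : Fin n, (aa n l0 j : ℂ) ^ 2 =
        -((bb n l0 j : ℂ) + zz0 n l0) ^ (n + 1) /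
          ∏ k ∈ Finset.univ.erase j, ((bb n l0 j : ℂ) - (bb n l0 k : ℂ))) ∧
    Dpoly n l0 (aa n l0) (bb n l0) = (X - C (zz0 n l0)) ^ (n + 1) := by
  refine ⟨Stmt4Aux.bb_injective him, fun j => ?_, Stmt4Aux.Dlemma hn him⟩
  have hne : (∏ k ∈ Finset.univ.erase j, ((bb n l0 j : ℂ) - (bb n l0 k : ℂ))) ≠ 0 := by
    apply Finset.prod_ne_zero_iff.mpr
    intro k hk
    apply sub_ne_zero.2
    intro hbb
    exact (Finset.mem_erase.1 hk).1
      (Stmt4Aux.bb_injective him (by exact_mod_cast hbb)).symm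
  rw [eq_div_iff hne]
  exact Stmt4Aux.key him j

end
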